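/- Suppose x₁,…,xₙ : ℝ → ℝ² solve the point vortex ODE on [0,T) with all masses m₂,…,mₙ positive, m₁ negative, −m₁ > m₂+⋯+mₙ, and Σᵢ mᵢxᵢ(0) = 0. Then all trajectories are uniformly bounded on [0,T): there exists M depending only on the masses and the initial data such that |xᵢ(t)| ≤ M for all i and all t ∈ [0,T). -/

import Mathlib

open scoped RealInnerProductSpace

noncomputable def perp (z : EuclideanSpace ℝ (Fin 2)) : EuclideanSpace ℝ (Fin 2) :=
  WithLp.toLp 2 (fun i : Fin 2 => if i = 0 then -(z 1) else z 0)

noncomputable def K (x y : EuclideanSpace ℝ (Fin 2)) : EuclideanSpace ℝ (Fin 2) :=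
  (‖x - y‖ ^ 2)⁻¹ • perp (x - y)

lemma perp_neg (z : EuclideanSpace ℝ (Fin 2)) : perp (-z) = - perp z := by
  ext i
  fin_cases i <;> simp [perp]

lemma K_antisymm (x y : EuclideanSpace ℝ (Fin 2)) : K y x = - K x y := by
  have h1 : y - x = -(x - y) := by abel
  rw [K, K, h1, perp_neg, norm_neg, smul_neg]

lemma inner_self_perp (z : EuclideanSpace ℝ (Fin 2)) : ⟪z, perp z⟫ = 0 := by
  simp [PiLp.inner_apply, Fin.sum_univ_two, perp]
  ring

lemma inner_K (x y : EuclideanSpace ℝ (Fin 2)) : ⟪x, K x y⟫ = ⟪y, K x y⟫ := by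
  have h : ⟪x - y, K x y⟫ = 0 := by
    rw [K, real_inner_smul_right, inner_self_perp, mul_zero]
  have := inner_sub_left (𝕜 := ℝ) x y (K x y)
  rw [this] at h
  linarith

lemma sum_antisymm {α : Type*} [Fintype α] [DecidableEq α] {E : Type*} [AddCommGroup E]
    [Module ℝ E] (f : α → α → E) (h : ∀ i j, f j i = - f i j) :
    ∑ i, ∑ j ∈ Finset.univ.erase i, f i j = 0 := by
  set A := ∑ i, ∑ j ∈ Finset.univ.erase i, f i j with hA
  have hswap : A = ∑ j, ∑ i ∈ Finset.univ.erase j, f i j := by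
    rw [hA]
    exact Finset.sum_comm' (by intro i j; simp [Finset.mem_erase]; exact ne_comm)
  have hneg : A = -A := by
    nth_rewrite 1 [hswap]
    rw [hA, ← Finset.sum_neg_distrib]
    refine Finset.sum_congr rfl fun j _ => ?_
    rw [← Finset.sum_neg_distrib]
    exact Finset.sum_congr rfl fun i _ => h j i
  have h2 : (2 : ℝ) • A = 0 := by
    rw [two_smul]; nth_rewrite 1 [hneg]; abel
  rcases smul_eq_zero.mp h2 with h'|h'
  · norm_num at h'
  · exact h'

theorem one_big_negative_bounded (n : ℕ) (m : Fin (n + 1) → ℝ)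
    (hm0 : m 0 < 0) (hm : ∀ i, i ≠ 0 → 0 < m i)
    (hbig : -m 0 > ∑ i ∈ Finset.univ.erase 0, m i)
    (T : ℝ) (hT : 0 < T)
    (x : Fin (n + 1) → ℝ → EuclideanSpace ℝ (Fin 2))
    (hsep : ∀ t ∈ Set.Ico (0 : ℝ) T, ∀ i j, i ≠ j → x i t ≠ x j t)
    (hode : ∀ t ∈ Set.Ico (0 : ℝ) T, ∀ i, HasDerivWithinAt (x i)
      (∑ j ∈ Finset.univ.erase i, m j • K (x i t) (x j t)) (Set.Ico (0 : ℝ) T) t)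
    (hinit : ∑ i, m i • x i 0 = 0) :
    ∃ M : ℝ, ∀ i, ∀ t ∈ Set.Ico (0 : ℝ) T, ‖x i t‖ ≤ M := by
  set s := Set.Ico (0 : ℝ) T with hs_def
  have hconv : Convex ℝ s := convex_Ico 0 T
  have h0s : (0 : ℝ) ∈ s := ⟨le_refl 0, hT⟩
  -- conservation of momentum
  have hPderiv : ∀ t ∈ s, HasDerivWithinAt (fun t => ∑ i, m i • x i t)
      (0 : EuclideanSpace ℝ (Fin 2)) s t := by
    intro t ht
    have hd := HasDerivWithinAt.sum (fun i (_ : i ∈ Finset.univ) =>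
      (hode t ht i).const_smul (m i))
    have hz : ∑ i : Fin (n+1), m i • ∑ j ∈ Finset.univ.erase i, m j • K (x i t) (x j t) = 0 := by
      have := sum_antisymm (fun i j => (m i * m j) • K (x i t) (x j t))
        (fun i j => by
          show (m j * m i) • K (x j t) (x i t) = -((m i * m j) • K (x i t) (x j t))
          rw [K_antisymm, smul_neg, mul_comm])
      rw [← this]
      refine Finset.sum_congr rfl fun i _ => ?_
      rw [Finset.smul_sum]
      exact Finset.sum_congr rfl fun j _ => by rw [smul_smul]
    rw [hz] at hd
    have e : (fun t => ∑ i, m i • x i t) = (∑ i, m i • x i : ℝ → EuclideanSpace ℝ (Fin 2)) := by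
      funext u; simp [Finset.sum_apply]
    rw [e]; exact hd
  have hP : ∀ t ∈ s, ∑ i, m i • x i t = 0 := by
    intro t ht
    have := Convex.norm_image_sub_le_of_norm_hasDerivWithin_le
      (f' := fun _ => (0 : EuclideanSpace ℝ (Fin 2)))
      (C := 0) (fun u hu => hPderiv u hu) (fun u _ => by simp) hconv h0s ht
    rw [hinit, zero_mul, sub_zero] at this
    exact norm_le_zero_iff.mp this
  -- conservation of moment of inertia
  have hIderiv : ∀ t ∈ s, HasDerivWithinAt (fun t => ∑ i, m i * ⟪x i t, x i t⟫)
      (0 : ℝ) s t := by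
    intro t ht
    have hd := HasDerivWithinAt.sum (fun i (_ : i ∈ Finset.univ) =>
      ((hode t ht i).inner ℝ (hode t ht i)).const_mul (m i))
    have hz : ∑ i : Fin (n+1), m i *
        (⟪x i t, ∑ j ∈ Finset.univ.erase i, m j • K (x i t) (x j t)⟫ +
         ⟪∑ j ∈ Finset.univ.erase i, m j • K (x i t) (x j t), x i t⟫) = 0 := by
      have key := sum_antisymm (fun i j => (2 * (m i * m j)) * ⟪x i t, K (x i t) (x j t)⟫)
        (fun i j => by
          show 2 * (m j * m i) * ⟪x j t, K (x j t) (x i t)⟫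
            = -(2 * (m i * m j) * ⟪x i t, K (x i t) (x j t)⟫)
          have h1 : ⟪x j t, K (x j t) (x i t)⟫ = - ⟪x i t, K (x i t) (x j t)⟫ := by
            rw [inner_K, K_antisymm, inner_neg_right]
          rw [h1]; ring)
      rw [← key]
      refine Finset.sum_congr rfl fun i _ => ?_
      rw [real_inner_comm (x i t) (∑ j ∈ Finset.univ.erase i, m j • K (x i t) (x j t)),
        ← two_mul, inner_sum, Finset.mul_sum, Finset.mul_sum]
      refine Finset.sum_congr rfl fun j _ => ?_
      rw [real_inner_smul_right]; ring
    rw [hz] at hd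
    have e : (fun t => ∑ i, m i * ⟪x i t, x i t⟫) = (∑ i, fun y => m i * ⟪x i y, x i y⟫ : ℝ → ℝ) := by
      funext u; simp [Finset.sum_apply]
    rw [e]; exact hd
  have hI : ∀ t ∈ s, ∑ i, m i * ⟪x i t, x i t⟫ = ∑ i, m i * ⟪x i 0, x i 0⟫ := by
    intro t ht
    have := Convex.norm_image_sub_le_of_norm_hasDerivWithin_le (f' := fun _ => (0 : ℝ))
      (C := 0) (fun u hu => hIderiv u hu) (fun u _ => by simp) hconv h0s ht
    rw [zero_mul] at this
    have := norm_le_zero_iff.mp this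
    linarith [sub_eq_zero.mp this]
  -- notation
  set a : ℝ := -m 0 with ha_def
  have ha : 0 < a := by simp [ha_def]; linarith
  set μ : ℝ := ∑ i ∈ Finset.univ.erase 0, m i with hμ_def
  have hμ : 0 ≤ μ := Finset.sum_nonneg fun i hi =>
    (hm i (Finset.mem_erase.mp hi).1).le
  have hμa : μ < a := hbig
  set c : ℝ := ∑ i, m i * ⟪x i 0, x i 0⟫ with hc_def
  set B0 : ℝ := μ * c / (a * (a - μ)) with hB0_def
  set Sb : ℝ := c + a * B0 with hSb_def
  -- pointwise bounds
  have key : ∀ t ∈ s, ‖x 0 t‖ ^ 2 ≤ B0 ∧ ∀ i, i ≠ 0 → m i * ‖x i t‖ ^ 2 ≤ Sb := by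
    intro t ht
    set S : ℝ := ∑ i ∈ Finset.univ.erase 0, m i * ‖x i t‖ ^ 2 with hS_def
    have hsplit : S + m 0 * ‖x 0 t‖ ^ 2 = c := by
      have h1 : ∑ i ∈ Finset.univ.erase 0, m i * ⟪x i t, x i t⟫ + m 0 * ⟪x 0 t, x 0 t⟫
          = ∑ i, m i * ⟪x i t, x i t⟫ :=
        Finset.sum_erase_add _ _ (Finset.mem_univ 0)
      rw [hI t ht] at h1
      rw [hS_def]
      simp_rw [← real_inner_self_eq_norm_sq]
      exact h1
    have hSc : S = c + a * ‖x 0 t‖ ^ 2 := by rw [ha_def]; linarith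
    -- momentum relation
    have hmom : a • x 0 t = ∑ i ∈ Finset.univ.erase 0, m i • x i t := by
      have h1 : (∑ i ∈ Finset.univ.erase 0, m i • x i t) + m 0 • x 0 t = 0 := by
        rw [Finset.sum_erase_add _ _ (Finset.mem_univ 0)]
        exact hP t ht
      rw [ha_def, neg_smul]
      exact (add_eq_zero_iff_eq_neg.mp h1).symm
    have hnorm : a * ‖x 0 t‖ ≤ ∑ i ∈ Finset.univ.erase 0, m i * ‖x i t‖ := by
      calc a * ‖x 0 t‖ = ‖a • x 0 t‖ := by
            rw [norm_smul, Real.norm_eq_abs, abs_of_pos ha]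
        _ = ‖∑ i ∈ Finset.univ.erase 0, m i • x i t‖ := by rw [hmom]
        _ ≤ ∑ i ∈ Finset.univ.erase 0, ‖m i • x i t‖ := norm_sum_le _ _
        _ = ∑ i ∈ Finset.univ.erase 0, m i * ‖x i t‖ := by
            refine Finset.sum_congr rfl fun i hi => ?_
            rw [norm_smul, Real.norm_eq_abs,
              abs_of_pos (hm i (Finset.mem_erase.mp hi).1)]
    -- Cauchy-Schwarz
    have hCS : (∑ i ∈ Finset.univ.erase 0, m i * ‖x i t‖) ^ 2 ≤ μ * S := by
      have := Finset.sum_mul_sq_le_sq_mul_sq (Finset.univ.erase 0)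
        (fun i => Real.sqrt (m i)) (fun i => Real.sqrt (m i) * ‖x i t‖)
      have e1 : ∑ i ∈ Finset.univ.erase 0,
          Real.sqrt (m i) * (Real.sqrt (m i) * ‖x i t‖)
          = ∑ i ∈ Finset.univ.erase 0, m i * ‖x i t‖ := by
        refine Finset.sum_congr rfl fun i hi => ?_
        rw [← mul_assoc, Real.mul_self_sqrt (hm i (Finset.mem_erase.mp hi).1).le]
      have e2 : ∑ i ∈ Finset.univ.erase 0, Real.sqrt (m i) ^ 2 = μ := by
        refine Finset.sum_congr rfl fun i hi => ?_
        exact Real.sq_sqrt (hm i (Finset.mem_erase.mp hi).1).le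
      have e3 : ∑ i ∈ Finset.univ.erase 0, (Real.sqrt (m i) * ‖x i t‖) ^ 2 = S := by
        refine Finset.sum_congr rfl fun i hi => ?_
        rw [mul_pow, Real.sq_sqrt (hm i (Finset.mem_erase.mp hi).1).le]
      rw [e1, e2, e3] at this
      exact this
    have hsq : (a * ‖x 0 t‖) ^ 2 ≤ μ * S := by
      refine le_trans ?_ hCS
      have h0 : 0 ≤ a * ‖x 0 t‖ := mul_nonneg ha.le (norm_nonneg _)
      exact pow_le_pow_left₀ h0 hnorm 2
    have hB : ‖x 0 t‖ ^ 2 ≤ B0 := by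
      rw [hB0_def, le_div_iff₀ (mul_pos ha (by linarith))]
      nlinarith [hsq, hSc]
    refine ⟨hB, fun i hi => ?_⟩
    have hSle : S ≤ Sb := by rw [hSb_def, hSc]; nlinarith
    have hterm : m i * ‖x i t‖ ^ 2 ≤ S :=
      Finset.single_le_sum (f := fun i => m i * ‖x i t‖ ^ 2)
        (fun j hj => mul_nonneg (hm j (Finset.mem_erase.mp hj).1).le (sq_nonneg _))
        (Finset.mem_erase.mpr ⟨hi, Finset.mem_univ i⟩)
    linarith
  -- assemble the bound
  refine ⟨Real.sqrt B0 + ∑ i ∈ Finset.univ.erase 0, Real.sqrt (Sb / m i), fun i t ht => ?_⟩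
  have hsumnn : 0 ≤ ∑ i ∈ Finset.univ.erase 0, Real.sqrt (Sb / m i) :=
    Finset.sum_nonneg fun _ _ => Real.sqrt_nonneg _
  by_cases hi : i = 0
  · subst hi
    have h1 : ‖x 0 t‖ ≤ Real.sqrt B0 := by
      rw [← Real.sqrt_sq (norm_nonneg (x 0 t))]
      exact Real.sqrt_le_sqrt (key t ht).1
    linarith
  · have h2 : ‖x i t‖ ^ 2 ≤ Sb / m i := by
      rw [le_div_iff₀ (hm i hi)]
      calc ‖x i t‖ ^ 2 * m i = m i * ‖x i t‖ ^ 2 := by ring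
        _ ≤ Sb := (key t ht).2 i hi
    have h3 : ‖x i t‖ ≤ Real.sqrt (Sb / m i) := by
      rw [← Real.sqrt_sq (norm_nonneg (x i t))]
      exact Real.sqrt_le_sqrt h2
    have h4 : Real.sqrt (Sb / m i) ≤ ∑ j ∈ Finset.univ.erase 0, Real.sqrt (Sb / m j) :=
      Finset.single_le_sum (f := fun j => Real.sqrt (Sb / m j))
        (fun _ _ => Real.sqrt_nonneg _)
        (Finset.mem_erase.mpr ⟨hi, Finset.mem_univ i⟩)
    have h5 : 0 ≤ Real.sqrt B0 := Real.sqrt_nonneg _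
    linarith
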